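/- Let R be a commutative ring, M an R-module, and B : M →ₗ[R] M →ₗ[R] R a bilinear form, and let Q be the quadratic form Q(x) = B(x,x) on M. The Chevalley operators γₓ(u) = (B x) ⌋ u + ι(x) * u on the exterior algebra ⋀M lift to an R-algebra homomorphism ρ : CliffordAlgebra Q → Module.End R (⋀M) such that ρ(ι_Q(x)) = γₓ for all x ∈ M (where ι_Q : M → CliffordAlgebra Q is the canonical embedding); this gives a representation of the Clifford algebra of Q on the exterior algebra. -/
import Mathlib

/-- **The Chevalley operators give a representation of the Clifford algebra on the
exterior algebra.**  For a bilinear form `B` on `M` and the quadratic form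
`Q x = B x x`, there is an `R`-algebra homomorphism
`ρ : CliffordAlgebra Q → Module.End R (⋀M)` with
`ρ(ι_Q x) u = (B x) ⌋ u + ι(x) * u` for all `x ∈ M`, `u ∈ ⋀M`. -/
theorem clifford_rep_on_exterior
    (R : Type*) [CommRing R] (M : Type*) [AddCommGroup M] [Module R M]
    (B : M →ₗ[R] M →ₗ[R] R) (Q : QuadraticForm R M) (hQ : ∀ x : M, Q x = B x x) :
    ∃ ρ : CliffordAlgebra Q →ₐ[R] Module.End R (ExteriorAlgebra R M),
      ∀ (x : M) (u : ExteriorAlgebra R M),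
        ρ (CliffordAlgebra.ι Q x) u =
          CliffordAlgebra.contractLeft (B x) u + ExteriorAlgebra.ι R x * u := by
  let φ : M →ₗ[R] Module.End R (ExteriorAlgebra R M) :=
    { toFun := fun x =>
        CliffordAlgebra.contractLeft (B x) +
          (LinearMap.mul R (ExteriorAlgebra R M)) (ExteriorAlgebra.ι R x)
      map_add' := fun x y => by simp [add_add_add_comm]
      map_smul' := fun r x => by simp [smul_add] }
  have hφ : ∀ x : M, φ x * φ x = algebraMap R _ (Q x) := by
    intro x
    refine LinearMap.ext fun u => ?_
    have hι : ExteriorAlgebra.ι R x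
        = CliffordAlgebra.ι (0 : QuadraticForm R M) x := rfl
    have h1 : CliffordAlgebra.contractLeft (B x)
        (ExteriorAlgebra.ι R x * u) =
        B x x • u - ExteriorAlgebra.ι R x *
          CliffordAlgebra.contractLeft (B x) u := by
      rw [hι]; exact CliffordAlgebra.contractLeft_ι_mul (B x) x u
    have h2 : CliffordAlgebra.contractLeft (B x)
        (CliffordAlgebra.contractLeft (B x) u) = 0 :=
      CliffordAlgebra.contractLeft_contractLeft (Q := (0 : QuadraticForm R M)) (B x) u
    have h3 : ExteriorAlgebra.ι R x * (ExteriorAlgebra.ι R x * u) = 0 := by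
      rw [← mul_assoc, ExteriorAlgebra.ι_sq_zero, zero_mul]
    simp only [φ, Module.End.mul_apply, LinearMap.coe_mk, AddHom.coe_mk,
      LinearMap.add_apply, LinearMap.mul_apply', map_add, Module.algebraMap_end_apply]
    rw [h1, h2, h3, hQ]
    abel
  refine ⟨CliffordAlgebra.lift Q ⟨φ, hφ⟩, fun x u => ?_⟩
  rw [CliffordAlgebra.lift_ι_apply]
  simp [φ]
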